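/- arXiv:hep-th/0002169 — 3 statements merged into one kernel-verified Lean document; each statement's English description precedes it below -/
import Mathlib

section
/- For every complex number x with 0 < |x| < 2π, setting y = exp(√−1·x) and y^{±1/2} := exp(±√−1·x/2), one has (y^{−1/2} − y^{1/2})^{−2} = − Σ_{g=0}^∞ m_g x^{2g−2}, where m_g := (−1)^{g−1}(2g−1)B_{2g}/(2g)! and the series converges absolutely. Equivalently, 1/(4 sin²(x/2)) = Σ_{g=0}^∞ (−1)^{g−1}(2g−1)(B_{2g}/(2g)!) x^{2g−2}. -/
open Complex Finset

noncomputable def Bco (n : ℕ) : ℂ := (bernoulli n : ℂ) / n.factorial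

lemma pi_sq_le : Real.pi ^ 2 ≤ 12 := by
  nlinarith [Real.pi_lt_d2, Real.pi_pos]

lemma zeta_even_le {k : ℕ} (hk : k ≠ 0) :
    ∑' n : ℕ, 1 / (n : ℝ) ^ (2 * k) ≤ 2 := by
  have h2 := hasSum_zeta_two
  have hk' := (hasSum_zeta_nat hk)
  have hle : ∑' n : ℕ, 1 / (n : ℝ) ^ (2 * k) ≤ Real.pi ^ 2 / 6 := by
    rw [← h2.tsum_eq]
    apply Summable.tsum_le_tsum _ hk'.summable h2.summable
    intro n
    rcases Nat.eq_zero_or_pos n with h | h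
    · subst h
      norm_num
      exact (zero_pow (by omega : 2 * k ≠ 0)).le
    · have h1 : (1:ℝ) ≤ (n:ℝ) := by exact_mod_cast h
      have : (n:ℝ) ^ 2 ≤ (n:ℝ) ^ (2 * k) := by
        apply pow_le_pow_right₀ h1; omega
      apply div_le_div_of_nonneg_left one_pos.le (by positivity) this
  nlinarith [pi_sq_le]

lemma bern_abs_div_fact_le (n : ℕ) :
    |((bernoulli n : ℚ) : ℝ)| / n.factorial ≤ 4 / (2 * Real.pi) ^ n := by
  have hpi : (0:ℝ) < Real.pi := Real.pi_pos
  rcases Nat.even_or_odd n with ⟨k, hkn⟩ | hodd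
  · rcases Nat.eq_zero_or_pos k with rfl | hkpos
    · have h0 : n = 0 := by omega
      subst h0
      norm_num
    · have hk0 : k ≠ 0 := by omega
      have hn : n = 2 * k := by omega
      subst hn
      set S := ∑' n : ℕ, 1 / (n : ℝ) ^ (2 * k) with hS
      set B := |((bernoulli (2 * k) : ℚ) : ℝ)| with hB
      set P := Real.pi ^ (2 * k) with hP
      set T := (2:ℝ) ^ (2 * k - 1) with hT
      set F := ((2 * k).factorial : ℝ) with hF
      have hs := (hasSum_zeta_nat hk0).tsum_eq
      have hSnn : (0:ℝ) ≤ S := tsum_nonneg (fun n => by positivity)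
      have hle : S ≤ 2 := zeta_even_le hk0
      have hPpos : (0:ℝ) < P := by positivity
      have hTpos : (0:ℝ) < T := by positivity
      have hFpos : (0:ℝ) < F := by
        have := (2*k).factorial_pos
        rw [hF]; exact_mod_cast this
      have habs : S = T * P * B / F := by
        have h := congrArg (fun t : ℝ => |t|) hs
        simp only [abs_div, abs_mul, _root_.abs_pow, abs_neg, abs_one, one_pow, one_mul,
          _root_.abs_of_pos hpi, Nat.abs_cast, _root_.abs_two] at h
        rw [show |∑' (b : ℕ), 1 / (b : ℝ) ^ (2 * k)| = S from by
          rw [← hS]; exact _root_.abs_of_nonneg hSnn] at h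
        exact h
      have hpow : (2 * Real.pi) ^ (2 * k) = 2 * T * P := by
        have h2 : (2:ℝ) ^ (2 * k) = 2 * T := by
          rw [hT, ← pow_succ']
          congr 1
          omega
        rw [mul_pow, h2, hP]
      rw [hpow]
      have h1 : S * F = T * P * B := by
        rw [habs]; field_simp
      have h2 : T * P * B ≤ 2 * F := by nlinarith
      rw [div_le_div_iff₀ hFpos (by positivity)]
      nlinarith
  · rcases Nat.eq_or_lt_of_le (Nat.one_le_iff_ne_zero.mpr (by rintro rfl; simp at hodd : n ≠ 0)) with h1 | h1
    · rw [← h1]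
      simp only [bernoulli_one, Nat.factorial_one]
      push_cast
      rw [abs_div, abs_neg, abs_one, _root_.abs_two, pow_one]
      rw [div_le_div_iff₀ (by norm_num) (by positivity)]
      nlinarith [Real.pi_le_four]
    · rw [bernoulli_eq_bernoulli'_of_ne_one (by omega),
        bernoulli'_eq_zero_of_odd hodd h1]
      simp
      positivity


lemma norm_Bco (n : ℕ) : ‖Bco n‖ ≤ 4 / (2 * Real.pi) ^ n := by
  have h := bern_abs_div_fact_le n
  rw [Bco, norm_div]
  have h1 : ‖(bernoulli n : ℂ)‖ = |((bernoulli n : ℚ) : ℝ)| := by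
    rw [show ((bernoulli n : ℚ) : ℂ) = (((bernoulli n : ℚ) : ℝ) : ℂ) by push_cast; ring]
    exact Complex.norm_real _
  have h2 : ‖((n.factorial : ℕ) : ℂ)‖ = (n.factorial : ℝ) := by
    simp
  rw [h1, h2]
  exact h

noncomputable def Fb (z : ℂ) : ℂ := ∑' n, Bco n * z ^ n

lemma summable_norm_Fb {z : ℂ} (hz : ‖z‖ < 2 * Real.pi) :
    Summable fun n => ‖Bco n * z ^ n‖ := by
  have hpi : (0:ℝ) < 2 * Real.pi := by positivity
  have hq : ‖z‖ / (2 * Real.pi) < 1 := (div_lt_one hpi).mpr hz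
  have hq0 : 0 ≤ ‖z‖ / (2 * Real.pi) := by positivity
  have hgeom : Summable fun n : ℕ => 4 * (‖z‖ / (2 * Real.pi)) ^ n :=
    (summable_geometric_of_lt_one hq0 hq).mul_left 4
  have bound : ∀ n : ℕ, ‖Bco n * z ^ n‖ ≤ 4 * (‖z‖ / (2 * Real.pi)) ^ n := by
    intro n
    have e1 : ‖Bco n * z ^ n‖ = ‖Bco n‖ * ‖z‖ ^ n := by
      rw [norm_mul, norm_pow]
    have e2 : 4 * (‖z‖ / (2 * Real.pi)) ^ n
        = 4 / (2 * Real.pi) ^ n * ‖z‖ ^ n := by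
      rw [div_pow]; ring
    rw [e1, e2]
    exact mul_le_mul_of_nonneg_right (norm_Bco n) (by positivity)
  exact Summable.of_nonneg_of_le (fun n => norm_nonneg _) bound hgeom

lemma exp_tsum (z : ℂ) : Complex.exp z = ∑' n, z ^ n / (n.factorial : ℂ) := by
  rw [Complex.exp_eq_exp_ℂ, NormedSpace.exp_eq_tsum_div]

lemma summable_norm_exp (z : ℂ) : Summable fun n => ‖z ^ n / (n.factorial : ℂ)‖ := by
  have := Real.summable_pow_div_factorial (‖z‖)
  apply this.congr
  intro n
  rw [norm_div, norm_pow]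
  simp

lemma Fb_mul_exp {z : ℂ} (hz : ‖z‖ < 2 * Real.pi) :
    Fb z * Complex.exp z = Fb z + z := by
  have hs1 := summable_norm_Fb hz
  have hs2 := summable_norm_exp z
  rw [Fb, exp_tsum, tsum_mul_tsum_eq_tsum_sum_range_of_summable_norm hs1 hs2]
  have key : ∀ n : ℕ, (∑ k ∈ Finset.range (n+1),
      Bco k * z ^ k * (z ^ (n - k) / ((n - k).factorial : ℂ)))
      = Bco n * z ^ n + (if n = 1 then z else 0) := by
    intro n
    have step1 : ∀ k ∈ Finset.range (n+1),
        Bco k * z ^ k * (z ^ (n - k) / ((n - k).factorial : ℂ))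
        = (((n.choose k : ℚ) * bernoulli k : ℚ) : ℂ) * z ^ n / (n.factorial : ℂ) := by
      intro k hk
      have hkn : k ≤ n := by
        simp only [Finset.mem_range] at hk; omega
      have hfac : (n.choose k : ℚ) * (k.factorial : ℚ) * ((n-k).factorial : ℚ)
          = (n.factorial : ℚ) := by
        exact_mod_cast congrArg (Nat.cast : ℕ → ℚ)
          (Nat.choose_mul_factorial_mul_factorial hkn)
      have hzp : z ^ k * z ^ (n - k) = z ^ n := by
        rw [← pow_add]
        congr 1
        omega
      rw [Bco]
      have hk0 : ((k.factorial : ℕ) : ℂ) ≠ 0 := by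
        exact_mod_cast k.factorial_ne_zero
      have hnk0 : (((n-k).factorial : ℕ) : ℂ) ≠ 0 := by
        exact_mod_cast (n-k).factorial_ne_zero
      have hn0 : ((n.factorial : ℕ) : ℂ) ≠ 0 := by
        exact_mod_cast n.factorial_ne_zero
      have hfacC : ((n.choose k : ℂ)) * (k.factorial : ℂ) * ((n-k).factorial : ℂ)
          = (n.factorial : ℂ) := by
        exact_mod_cast congrArg (Nat.cast : ℕ → ℂ)
          (Nat.choose_mul_factorial_mul_factorial hkn)
      push_cast
      field_simp
      rw [← hzp]
      ring_nf
      rw [← hfacC]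
      ring
    rw [Finset.sum_congr rfl step1]
    rw [← Finset.sum_div, ← Finset.sum_mul]
    rw [show (∑ k ∈ Finset.range (n+1), (((n.choose k : ℚ) * bernoulli k : ℚ) : ℂ))
        = (((bernoulli n + if n = 1 then 1 else 0) : ℚ) : ℂ) from by
      rw [← Rat.cast_sum]
      congr 1
      rw [Finset.sum_range_succ, sum_bernoulli]
      simp [add_comm]]
    push_cast
    rw [add_mul, add_div]
    congr 1
    · rw [Bco]; ring
    · split_ifs with h
      · subst h
        simp
      · simp
  rw [tsum_congr key]
  rw [Summable.tsum_add (hs1.of_norm) (summable_of_ne_finset_zero (s := {1})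
    (by intro n hn; simp only [Finset.mem_singleton] at hn; simp [hn]))]
  rw [tsum_ite_eq]


lemma summable_u {R : ℝ} (hR : 0 < R) (hR2 : R < 2 * Real.pi) :
    Summable (fun n : ℕ => 4 / (2 * Real.pi) * ((n : ℝ) * (R / (2 * Real.pi)) ^ (n - 1))) := by
  apply Summable.mul_left
  set q := R / (2 * Real.pi) with hq
  have hpi : (0:ℝ) < 2 * Real.pi := by positivity
  have hq1 : ‖q‖ < 1 := by
    rw [Real.norm_eq_abs, abs_of_pos (by positivity)]
    exact (div_lt_one hpi).mpr hR2
  have hq0 : 0 ≤ q := by positivity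
  have h1 : Summable (fun n : ℕ => ((n:ℝ) + 1) * q ^ n) := by
    have ha := summable_pow_mul_geometric_of_norm_lt_one 1 hq1
    have hb := summable_geometric_of_lt_one hq0 (by rw [Real.norm_eq_abs, _root_.abs_of_nonneg hq0] at hq1; exact hq1)
    have := ha.add hb
    apply this.congr
    intro n
    simp [pow_one]
    ring
  apply (summable_nat_add_iff 1).mp
  apply h1.congr
  intro n
  push_cast
  ring_nf

lemma deriv_term_bound {R : ℝ} (hR : 0 < R) (n : ℕ) {y : ℂ} (hy : ‖y‖ ≤ R) :
    ‖Bco n * ((n : ℂ) * y ^ (n - 1))‖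
      ≤ 4 / (2 * Real.pi) * ((n:ℝ) * (R / (2 * Real.pi)) ^ (n - 1)) := by
  have hpi : (0:ℝ) < 2 * Real.pi := by positivity
  cases n with
  | zero => simp
  | succ k =>
    have e1 : ‖Bco (k+1) * (((k+1 : ℕ) : ℂ) * y ^ (k + 1 - 1))‖
        = ‖Bco (k+1)‖ * ((((k+1:ℕ)):ℝ) * ‖y‖ ^ k) := by
      rw [norm_mul, norm_mul, norm_pow, Complex.norm_natCast, Nat.add_sub_cancel]
    rw [e1]
    have hb := norm_Bco (k+1)
    have hy' : ‖y‖ ≤ R := hy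
    have hyR : ‖y‖ ^ k ≤ R ^ k := pow_le_pow_left₀ (norm_nonneg y) hy' k
    calc ‖Bco (k+1)‖ * (((k+1:ℕ):ℝ) * ‖y‖ ^ k)
        ≤ (4 / (2*Real.pi) ^ (k+1)) * (((k+1:ℕ):ℝ) * R ^ k) := by
          apply mul_le_mul hb (mul_le_mul_of_nonneg_left hyR (by positivity))
            (by positivity) (by positivity)
      _ = 4 / (2 * Real.pi) * (((k+1 : ℕ):ℝ) * (R / (2 * Real.pi)) ^ (k + 1 - 1)) := by
          rw [show k + 1 - 1 = k from rfl, div_pow, pow_succ]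
          field_simp

lemma Fb_hasDerivAt {z : ℂ} (hz : ‖z‖ < 2 * Real.pi) :
    HasDerivAt Fb (∑' n, Bco n * ((n : ℂ) * z ^ (n - 1))) z := by
  set R := (‖z‖ + 2 * Real.pi) / 2 with hRdef
  have hpi : (0:ℝ) < 2 * Real.pi := by positivity
  have hR0 : 0 < R := by positivity
  have hR2 : R < 2 * Real.pi := by rw [hRdef]; linarith
  have hzR : ‖z‖ < R := by rw [hRdef]; linarith
  have h := hasDerivAt_tsum_of_isPreconnected (summable_u hR0 hR2)
    (Metric.isOpen_ball) ((convex_ball (0:ℂ) R).isPreconnected)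
    (g := fun n w => Bco n * w ^ n)
    (g' := fun n w => Bco n * ((n : ℂ) * w ^ (n - 1)))
    (fun n y _ => (hasDerivAt_pow n y).const_mul (Bco n))
    (fun n y hy => by
      apply deriv_term_bound hR0 n
      rw [Metric.mem_ball, dist_zero_right] at hy
      exact le_of_lt hy)
    (Metric.mem_ball_self hR0)
    (summable_of_ne_finset_zero (s := {0}) (by
      intro n hn
      simp only [Finset.mem_singleton] at hn
      simp [zero_pow hn]))
    (by rw [Metric.mem_ball, dist_zero_right]; exact hzR)
  exact h

lemma summable_deriv_terms {z : ℂ} (hz : ‖z‖ < 2 * Real.pi) :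
    Summable (fun n => Bco n * ((n : ℂ) * z ^ (n - 1))) := by
  set R := (‖z‖ + 2 * Real.pi) / 2 with hRdef
  have hpi : (0:ℝ) < 2 * Real.pi := by positivity
  have hR0 : 0 < R := by positivity
  have hR2 : R < 2 * Real.pi := by rw [hRdef]; linarith
  have hzR : ‖z‖ ≤ R := by rw [hRdef]; linarith
  exact Summable.of_norm_bounded (summable_u hR0 hR2)
    (fun n => deriv_term_bound hR0 n hzR)

lemma Fb_identity {z : ℂ} (hz : ‖z‖ < 2 * Real.pi) :
    Fb z * (Complex.exp z - 1) = z := by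
  have h := Fb_mul_exp hz
  rw [mul_sub, mul_one, h]
  ring

lemma deriv_identity {z : ℂ} (hz : ‖z‖ < 2 * Real.pi) :
    (∑' n, Bco n * ((n : ℂ) * z ^ (n - 1))) * (Complex.exp z - 1)
      + Fb z * Complex.exp z = 1 := by
  have h1 : HasDerivAt (fun w => Fb w * (Complex.exp w - 1))
      ((∑' n, Bco n * ((n : ℂ) * z ^ (n - 1))) * (Complex.exp z - 1)
        + Fb z * Complex.exp z) z :=
    (Fb_hasDerivAt hz).mul ((Complex.hasDerivAt_exp z).sub_const 1)
  have h2 : (fun w : ℂ => w) =ᶠ[nhds z] (fun w => Fb w * (Complex.exp w - 1)) := by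
    have hmem : Metric.ball (0:ℂ) (2 * Real.pi) ∈ nhds z :=
      Metric.isOpen_ball.mem_nhds (by
        rw [Metric.mem_ball, dist_zero_right]; exact hz)
    filter_upwards [hmem] with w hw
    rw [Metric.mem_ball, dist_zero_right] at hw
    exact (Fb_identity hw).symm
  have h3 : HasDerivAt (fun w : ℂ => w)
      ((∑' n, Bco n * ((n : ℂ) * z ^ (n - 1))) * (Complex.exp z - 1)
        + Fb z * Complex.exp z) z := h1.congr_of_eventuallyEq h2
  exact h3.unique (hasDerivAt_id z)


lemma key2 {z : ℂ} (hz : ‖z‖ < 2 * Real.pi) :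
    Fb z ^ 2 * Complex.exp z
      = Fb z - z * (∑' n, Bco n * ((n : ℂ) * z ^ (n - 1))) := by
  have hD := deriv_identity hz
  have hI := Fb_identity hz
  linear_combination Fb z * hD - (∑' n, Bco n * ((n : ℂ) * z ^ (n - 1))) * hI

lemma key3 {z : ℂ} (hz : ‖z‖ < 2 * Real.pi) :
    Fb z ^ 2 * Complex.exp z = ∑' n : ℕ, (1 - (n : ℂ)) * Bco n * z ^ n := by
  rw [key2 hz, Fb, ← tsum_mul_left,
    ← Summable.tsum_sub ((summable_norm_Fb hz).of_norm)
      ((summable_deriv_terms hz).mul_left z)]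
  apply tsum_congr
  intro n
  cases n with
  | zero => simp
  | succ k =>
    have : z * (Bco (k+1) * (((k+1 : ℕ) : ℂ) * z ^ (k + 1 - 1)))
        = ((k+1 : ℕ) : ℂ) * Bco (k+1) * z ^ (k+1) := by
      rw [Nat.add_sub_cancel, pow_succ]
      ring
    rw [this]
    ring

lemma bco_odd {n : ℕ} (hodd : Odd n) (h1 : 1 < n) : Bco n = 0 := by
  rw [Bco, bernoulli_eq_bernoulli'_of_ne_one (by omega),
    bernoulli'_eq_zero_of_odd hodd h1]
  simp

lemma key4 (z : ℂ) :
    ∑' g : ℕ, (1 - ((2*g : ℕ) : ℂ)) * Bco (2*g) * z ^ (2*g)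
      = ∑' n : ℕ, (1 - (n : ℂ)) * Bco n * z ^ n := by
  apply Function.Injective.tsum_eq
    (g := fun g : ℕ => 2 * g) (f := fun n : ℕ => (1 - (n : ℂ)) * Bco n * z ^ n)
    (fun a b h => Nat.eq_of_mul_eq_mul_left two_pos h)
  intro n hn
  simp only [Function.mem_support, ne_eq] at hn
  rcases Nat.even_or_odd n with ⟨k, hk⟩ | hodd
  · exact ⟨k, show 2 * k = n by omega⟩
  · exfalso
    apply hn
    rcases Nat.eq_or_lt_of_le (Nat.one_le_iff_ne_zero.mpr
      (by rintro rfl; simp at hodd) : 1 ≤ n) with h1 | h1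
    · rw [← h1]
      norm_num
    · rw [bco_odd hodd h1]
      ring

lemma summable_norm_A {z : ℂ} (hz : ‖z‖ < 2 * Real.pi) :
    Summable fun n : ℕ => ‖(1 - (n : ℂ)) * Bco n * z ^ n‖ := by
  have hpi : (0:ℝ) < 2 * Real.pi := by positivity
  have hq : ‖‖z‖ / (2 * Real.pi)‖ < 1 := by
    rw [Real.norm_eq_abs, _root_.abs_of_nonneg (by positivity)]
    exact (div_lt_one hpi).mpr hz
  have hq0 : (0:ℝ) ≤ ‖z‖ / (2 * Real.pi) := by positivity
  set q := ‖z‖ / (2 * Real.pi) with hqdef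
  have hgeom : Summable (fun n : ℕ => (1 + (n:ℝ)) * (4 * q ^ n)) := by
    have ha := summable_pow_mul_geometric_of_norm_lt_one 1 hq
    have hb := summable_geometric_of_lt_one hq0
      (by rw [Real.norm_eq_abs, _root_.abs_of_nonneg hq0] at hq; exact hq)
    have := (ha.add hb).mul_left 4
    apply this.congr
    intro n
    simp [pow_one]
    ring
  apply Summable.of_nonneg_of_le (fun n => norm_nonneg _) _ hgeom
  intro n
  rw [norm_mul, norm_mul, norm_pow]
  have h1 : ‖(1 - (n:ℂ))‖ ≤ 1 + (n:ℝ) := by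
    calc ‖(1 - (n:ℂ))‖ ≤ ‖(1:ℂ)‖ + ‖(n:ℂ)‖ := norm_sub_le _ _
      _ = 1 + (n:ℝ) := by rw [norm_one, Complex.norm_natCast]
  have h2 : ‖Bco n‖ * ‖z‖ ^ n ≤ 4 * q ^ n := by
    have e2 : 4 * q ^ n = 4 / (2 * Real.pi) ^ n * ‖z‖ ^ n := by
      rw [hqdef, div_pow]; ring
    rw [e2]
    exact mul_le_mul_of_nonneg_right (norm_Bco n) (by positivity)
  calc ‖(1 - (n:ℂ))‖ * ‖Bco n‖ * ‖z‖ ^ n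
      ≤ (1 + (n:ℝ)) * (‖Bco n‖ * ‖z‖ ^ n) := by
        rw [mul_assoc]
        exact mul_le_mul_of_nonneg_right h1 (by positivity)
    _ ≤ (1 + (n:ℝ)) * (4 * q ^ n) :=
        mul_le_mul_of_nonneg_left h2 (by positivity)


/-- For every complex number `x` with `0 < |x| < 2π`, setting `y = exp(√−1·x)`
and `y^{±1/2} := exp(±√−1·x/2)`, one has
`(y^{−1/2} − y^{1/2})^{−2} = − ∑_{g=0}^∞ m_g x^{2g−2}`, where
`m_g := (−1)^{g−1}(2g−1)B_{2g}/(2g)!`, and the series converges absolutely. -/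
theorem string_coupling_expansion (x : ℂ)
    (hx0 : 0 < ‖x‖) (hx2 : ‖x‖ < 2 * Real.pi)
    (m : ℕ → ℚ)
    (hm : ∀ g : ℕ, m g = (-1 : ℚ) ^ ((g : ℤ) - 1) * (2 * (g : ℚ) - 1) *
        bernoulli (2 * g) / (Nat.factorial (2 * g) : ℚ)) :
    Summable (fun g : ℕ => ‖(m g : ℂ) * x ^ (2 * (g : ℤ) - 2)‖) ∧
    (Complex.exp (-(Complex.I * x) / 2) - Complex.exp (Complex.I * x / 2)) ^ (-2 : ℤ)
      = - ∑' g : ℕ, (m g : ℂ) * x ^ (2 * (g : ℤ) - 2) := by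
  have hpi : (0:ℝ) < 2 * Real.pi := by positivity
  set z : ℂ := Complex.I * x with hzdef
  have habs : ‖z‖ = ‖x‖ := by
    rw [hzdef, norm_mul, Complex.norm_I, one_mul]
  have hz2 : ‖z‖ < 2 * Real.pi := by rw [habs]; exact hx2
  have hxne : x ≠ 0 := (norm_ne_zero_iff).mp (ne_of_gt hx0)
  have hzne : z ≠ 0 := by
    rw [hzdef]
    exact mul_ne_zero Complex.I_ne_zero hxne
  have hz2ne : z ^ 2 ≠ 0 := pow_ne_zero 2 hzne
  -- per-term equality
  have hterm : ∀ g : ℕ, (1 - ((2*g : ℕ) : ℂ)) * Bco (2*g) * z ^ (2*g) / z ^ 2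
      = -((m g : ℂ) * x ^ (2 * (g:ℤ) - 2)) := by
    intro g
    have hfac : ((2*g).factorial : ℂ) ≠ 0 := by exact_mod_cast (2*g).factorial_ne_zero
    have hmg : (m g : ℂ) = (-1:ℂ)^((g:ℤ)-1) * (2*(g:ℂ) - 1)
        * ((bernoulli (2*g) : ℚ) : ℂ) / ((2*g).factorial : ℂ) := by
      rw [hm g]
      push_cast
      ring
    have hneg : (-1:ℂ)^((g:ℤ)-1) = -(-1:ℂ)^(g:ℕ) := by
      rw [sub_eq_add_neg, zpow_add₀ (by norm_num : (-1:ℂ) ≠ 0), zpow_natCast,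
        zpow_neg_one]
      norm_num
    have hzpow : z ^ (2*g) = (-1:ℂ)^g * x^(2*g) := by
      rw [hzdef, mul_pow, pow_mul, Complex.I_sq]
    have hz2' : z^2 = -x^2 := by rw [hzdef, mul_pow, Complex.I_sq]; ring
    have hxpow : x ^ (2*(g:ℤ)-2) = x^(2*g) / x^2 := by
      have e : (2*(g:ℤ)-2) = ((2*g : ℕ) : ℤ) - ((2:ℕ) : ℤ) := by push_cast; ring
      rw [e, zpow_sub₀ hxne, zpow_natCast, zpow_natCast]
    rw [hmg, hneg, hzpow, hz2', hxpow, Bco]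
    have hm1 : ((-1:ℂ))^g ≠ 0 := pow_ne_zero g (by norm_num)
    field_simp
    push_cast
    ring
  -- summability
  have hinj : Function.Injective (fun g : ℕ => 2 * g) :=
    fun a b h => Nat.eq_of_mul_eq_mul_left two_pos h
  have hsum2 : Summable (fun g : ℕ => ‖(m g : ℂ) * x ^ (2*(g:ℤ)-2)‖) := by
    have h1 := summable_norm_A hz2
    apply ((h1.comp_injective hinj).div_const (‖z^2‖)).congr
    intro g
    have hM : (m g : ℂ) * x ^ (2*(g:ℤ)-2)
        = -((1 - ((2*g : ℕ) : ℂ)) * Bco (2*g) * z ^ (2*g) / z ^ 2) := by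
      linear_combination hterm g
    rw [hM, norm_neg, norm_div]
    rfl
  refine ⟨hsum2, ?_⟩
  -- analytic identities
  have hI := Fb_identity hz2
  have hFne : Fb z ≠ 0 := by
    intro h
    rw [h, zero_mul] at hI
    exact hzne hI.symm
  have hEm1 : Complex.exp z - 1 ≠ 0 := by
    intro h
    rw [h, mul_zero] at hI
    exact hzne hI.symm
  have hEz := Complex.exp_ne_zero z
  have hw : (Complex.exp (-z/2) - Complex.exp (z/2))^2
      = Complex.exp (-z) * (Complex.exp z - 1)^2 := by
    have h1 : Complex.exp (-z) * Complex.exp z = 1 := by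
      rw [← Complex.exp_add]; simp
    have h2 : Complex.exp (-z/2) * Complex.exp (z/2) = 1 := by
      rw [← Complex.exp_add]
      rw [show -z/2 + z/2 = 0 by ring]
      exact Complex.exp_zero
    have h3 : Complex.exp (-z/2) * Complex.exp (-z/2) = Complex.exp (-z) := by
      rw [← Complex.exp_add]
      congr 1
      ring
    have h4 : Complex.exp (z/2) * Complex.exp (z/2) = Complex.exp z := by
      rw [← Complex.exp_add]
      congr 1
      ring
    linear_combination h3 + h4 - 2*h2 - Complex.exp z * h1 + 2*h1
  have hzsq : (Complex.exp z - 1)^2 * Fb z^2 = z^2 := by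
    linear_combination (Fb z * (Complex.exp z - 1) + z) * hI
  have hinv : (Complex.exp (-z) * (Complex.exp z - 1)^2)⁻¹
      = Complex.exp z * Fb z^2 / z^2 := by
    rw [Complex.exp_neg, mul_inv, inv_inv, ← hzsq]
    field_simp
  have hzp : (Complex.exp (-z/2) - Complex.exp (z/2))^(-2:ℤ)
      = ((Complex.exp (-z/2) - Complex.exp (z/2))^2)⁻¹ := by
    rw [zpow_neg]
    norm_cast
  have hgoal : (Complex.exp (-(z)/2) - Complex.exp (z/2)) ^ (-2 : ℤ)
      = - ∑' g : ℕ, (m g : ℂ) * x ^ (2 * (g : ℤ) - 2) := by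
    rw [hzp, hw, hinv]
    have h5 : Complex.exp z * Fb z ^ 2 = ∑' n : ℕ, (1-(n:ℂ)) * Bco n * z^n := by
      rw [← key3 hz2]; ring
    rw [h5, ← key4 z, ← tsum_div_const, tsum_congr hterm, tsum_neg]
  rw [show -(z)/2 = -(Complex.I * x)/2 from by rw [hzdef],
    show z/2 = Complex.I * x/2 from by rw [hzdef]] at hgoal
  exact hgoal
end

section
/- Let k ∈ ℤ, let Γ be an additive abelian group, let n₀ ∈ ℕ, and let D : ℤ × Γ → ℂ satisfy D(n,γ) = 0 whenever n < −n₀. Let τ, σ ∈ ℂ, let c : Γ → ℂ be an additive group homomorphism, and write e[w] := exp(2π√−1·w), p := e[σ], q := e[τ], ζ^γ := e[c(γ)]. For each integer ℓ ≥ 1 define the Hecke transform (Φ_k|V_ℓ) := ℓ^{k−1} Σ_{a,d ≥ 1, ad = ℓ} Σ_{b=0}^{d−1} d^{−k} Σ_{(n,γ) ∈ ℤ×Γ} D(n,γ) · e[ n(aτ+b)/d + a·c(γ) ]. Assume that the family (ℓ, a, d, b, n, γ) ↦ p^ℓ · ℓ^{k−1} d^{−k} D(n,γ) e[ n(aτ+b)/d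 + a·c(γ) ], indexed over ℓ ≥ 1, a,d ≥ 1 with ad = ℓ, 0 ≤ b ≤ d−1, and (n,γ) ∈ ℤ×Γ, is absolutely summable. Then Σ_{ℓ=1}^∞ p^ℓ (Φ_k|V_ℓ) = Σ_{ℓ ≥ 1, (n,γ) ∈ ℤ×Γ} D(ℓn, γ) · Li_{1−k}(p^ℓ q^n ζ^γ), where Li_{1−k}(ξ) := Σ_{h=1}^∞ h^{k−1} ξ^h, and all the sums on both sides converge absolutely. -/
open Complex

/-- `e[w] := exp(2π√−1·w)`. -/
noncomputable def eTwoPiI (w : ℂ) : ℂ := Complex.exp (2 * Real.pi * Complex.I * w)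

/-- For an integer `k`, `Li_{1−k}(ξ) := Σ_{h=1}^∞ h^{k−1} ξ^h`. -/
noncomputable def LiOneSubK (k : ℤ) (ξ : ℂ) : ℂ :=
  ∑' h : ℕ, ((h + 1 : ℕ) : ℂ) ^ (k - 1) * ξ ^ (h + 1)

/-- Index set for the absolute-summability hypothesis: tuples `(ℓ,a,d,b,n,γ)` with
`ℓ ≥ 1`, `a,d ≥ 1`, `ad = ℓ`, `0 ≤ b ≤ d−1`. -/
structure HeckeIndex (Γ : Type*) where
  ℓ : ℕ
  a : ℕ
  d : ℕ
  b : ℕ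
  n : ℤ
  γ : Γ
  hℓ : 1 ≤ ℓ
  ha : 1 ≤ a
  hd : 1 ≤ d
  had : a * d = ℓ
  hb : b < d

/-- The member of the family indexed by `(ℓ,a,d,b,n,γ)`:
`p^ℓ · ℓ^{k−1} d^{−k} D(n,γ) e[ n(aτ+b)/d + a·c(γ) ]`. -/
noncomputable def heckeFamily {Γ : Type*} [AddCommGroup Γ] (k : ℤ) (D : ℤ × Γ → ℂ) (τ σ : ℂ)
    (c : Γ →+ ℂ) (i : HeckeIndex Γ) : ℂ :=
  eTwoPiI σ ^ i.ℓ * (i.ℓ : ℂ) ^ (k - 1) * (i.d : ℂ) ^ (-k) * D (i.n, i.γ) *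
    eTwoPiI ((i.n : ℂ) * ((i.a : ℂ) * τ + (i.b : ℂ)) / (i.d : ℂ) + (i.a : ℂ) * c i.γ)

/-- The Hecke transform `Φ_k|V_ℓ := ℓ^{k−1} Σ_{ad=ℓ} Σ_{b=0}^{d−1} d^{−k}
Σ_{(n,γ)} D(n,γ) e[ n(aτ+b)/d + a·c(γ) ]` for `ℓ ≥ 1`. -/
noncomputable def heckeTransform {Γ : Type*} [AddCommGroup Γ] (k : ℤ) (D : ℤ × Γ → ℂ) (τ : ℂ)
    (c : Γ →+ ℂ) (ℓ : ℕ) : ℂ :=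
  (ℓ : ℂ) ^ (k - 1) *
    ∑ ad ∈ Nat.divisorsAntidiagonal ℓ, ∑ b ∈ Finset.range ad.2,
      (ad.2 : ℂ) ^ (-k) *
        ∑' ng : ℤ × Γ, D ng *
          eTwoPiI ((ng.1 : ℂ) * ((ad.1 : ℂ) * τ + (b : ℂ)) / (ad.2 : ℂ) + (ad.1 : ℂ) * c ng.2)

namespace HeckeLift

/-! ### Basic lemmas about `eTwoPiI` -/

lemma eTwoPiI_add (w z : ℂ) : eTwoPiI (w + z) = eTwoPiI w * eTwoPiI z := by
  simp [eTwoPiI, mul_add, Complex.exp_add]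

lemma eTwoPiI_intCast (m : ℤ) : eTwoPiI (m : ℂ) = 1 := by
  have h : (2 * (Real.pi : ℂ) * Complex.I * (m : ℂ)) = (m : ℂ) * (2 * Real.pi * Complex.I) := by
    ring
  rw [eTwoPiI, h, Complex.exp_int_mul_two_pi_mul_I]

lemma eTwoPiI_nat_mul (n : ℕ) (w : ℂ) : eTwoPiI ((n : ℂ) * w) = eTwoPiI w ^ n := by
  rw [eTwoPiI, eTwoPiI, ← Complex.exp_nat_mul]
  congr 1
  ring

lemma eTwoPiI_int_mul (m : ℤ) (w : ℂ) : eTwoPiI ((m : ℂ) * w) = eTwoPiI w ^ m := by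
  rw [eTwoPiI, eTwoPiI, ← Complex.exp_int_mul]
  congr 1
  ring

lemma eTwoPiI_div_int_eq_one {d : ℕ} (hd : d ≠ 0) {n : ℤ} (h : (d : ℤ) ∣ n) :
    eTwoPiI ((n : ℂ) / (d : ℂ)) = 1 := by
  obtain ⟨m, rfl⟩ := h
  have hdC : (d : ℂ) ≠ 0 := Nat.cast_ne_zero.mpr hd
  have h2 : (((d : ℤ) * m : ℤ) : ℂ) / (d : ℂ) = (m : ℂ) := by
    push_cast
    field_simp
  rw [h2, eTwoPiI_intCast]

lemma eTwoPiI_div_ne_one {d : ℕ} (hd : d ≠ 0) {n : ℤ} (h : ¬ (d : ℤ) ∣ n) :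
    eTwoPiI ((n : ℂ) / (d : ℂ)) ≠ 1 := by
  intro he
  have hdC : (d : ℂ) ≠ 0 := Nat.cast_ne_zero.mpr hd
  rw [eTwoPiI, Complex.exp_eq_one_iff] at he
  obtain ⟨t, ht⟩ := he
  have h2 : (2 * (Real.pi : ℂ) * Complex.I) ≠ 0 := by
    simp [Real.pi_ne_zero, Complex.I_ne_zero, two_ne_zero]
  have h3 : (n : ℂ) / (d : ℂ) = (t : ℂ) := by
    apply mul_left_cancel₀ h2
    rw [ht]; ring
  have h4 : (n : ℂ) = (t : ℂ) * (d : ℂ) := by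
    field_simp at h3
    linear_combination h3
  have h5 : n = t * (d : ℤ) := by exact_mod_cast h4
  exact h ⟨t, by linarith⟩

/-- Character orthogonality: `Σ_{b<d} e[nb/d] = d·[d ∣ n]`. -/
lemma charSum (d : ℕ) (hd : d ≠ 0) (n : ℤ) :
    ∑ b ∈ Finset.range d, eTwoPiI ((n : ℂ) * (b : ℂ) / (d : ℂ)) =
      if (d : ℤ) ∣ n then (d : ℂ) else 0 := by
  have hterm : ∀ b : ℕ, eTwoPiI ((n : ℂ) * (b : ℂ) / (d : ℂ)) = eTwoPiI ((n : ℂ) / (d : ℂ)) ^ b := by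
    intro b
    rw [← eTwoPiI_nat_mul]
    congr 1
    ring
  simp only [hterm]
  by_cases h : (d : ℤ) ∣ n
  · rw [if_pos h]
    simp [eTwoPiI_div_int_eq_one hd h]
  · rw [if_neg h]
    rw [geom_sum_eq (eTwoPiI_div_ne_one hd h)]
    have hpow : eTwoPiI ((n : ℂ) / (d : ℂ)) ^ d = 1 := by
      rw [← eTwoPiI_nat_mul]
      have hdC : (d : ℂ) ≠ 0 := Nat.cast_ne_zero.mpr hd
      have : (d : ℂ) * ((n : ℂ) / (d : ℂ)) = (n : ℂ) := by field_simp
      rw [this, eTwoPiI_intCast]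
    rw [hpow]
    simp

variable {Γ : Type*} [AddCommGroup Γ]

/-- The generic term of the Hecke transform, for parameters `(a,d,b)` and `(n,γ)`. -/
noncomputable def GGt (k : ℤ) (D : ℤ × Γ → ℂ) (τ σ : ℂ) (c : Γ →+ ℂ) (a d b : ℕ)
    (ng : ℤ × Γ) : ℂ :=
  eTwoPiI σ ^ (a * d) * ((a * d : ℕ) : ℂ) ^ (k - 1) * (d : ℂ) ^ (-k) * D ng *
    eTwoPiI ((ng.1 : ℂ) * ((a : ℂ) * τ + (b : ℂ)) / (d : ℂ) + (a : ℂ) * c ng.2)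

/-- The generic term of the polylogarithm side. -/
noncomputable def Hfun (k : ℤ) (D : ℤ × Γ → ℂ) (τ σ : ℂ) (c : Γ →+ ℂ) (a d : ℕ)
    (mγ : ℤ × Γ) : ℂ :=
  D ((d : ℤ) * mγ.1, mγ.2) * ((a : ℕ) : ℂ) ^ (k - 1) *
    (eTwoPiI σ ^ d * eTwoPiI τ ^ mγ.1 * eTwoPiI (c mγ.2)) ^ a

/-- The key algebraic identity: `ℓ^{k−1} d^{−k} = d^{−1} a^{k−1}` together with the
splitting of the exponentials, at `n = d·m`. -/
lemma key_alg (k : ℤ) (D : ℤ × Γ → ℂ) (τ σ : ℂ) (c : Γ →+ ℂ) (a d b : ℕ) (hd : d ≠ 0)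
    (m : ℤ) (γ : Γ) :
    GGt k D τ σ c a d b ((d : ℤ) * m, γ) = (d : ℂ)⁻¹ * Hfun k D τ σ c a d (m, γ) := by
  have hdC : (d : ℂ) ≠ 0 := Nat.cast_ne_zero.mpr hd
  unfold GGt Hfun
  dsimp only
  have harg : ((((d : ℤ) * m : ℤ) : ℂ) * ((a : ℂ) * τ + (b : ℂ)) / (d : ℂ) + (a : ℂ) * c γ)
      = (((m * a : ℤ) : ℂ) * τ + ((m * b : ℤ) : ℂ)) + (a : ℂ) * c γ := by
    push_cast
    field_simp
  rw [harg, eTwoPiI_add, eTwoPiI_add, eTwoPiI_int_mul, eTwoPiI_intCast, mul_one,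
    eTwoPiI_nat_mul]
  have hq : eTwoPiI τ ^ (m * (a : ℤ)) = (eTwoPiI τ ^ m) ^ a := by
    rw [zpow_mul, zpow_natCast]
  rw [hq]
  have hp : eTwoPiI σ ^ (a * d) = (eTwoPiI σ ^ d) ^ a := by
    rw [mul_comm a d, pow_mul]
  rw [hp]
  have hcast : ((a * d : ℕ) : ℂ) ^ (k - 1) = ((a : ℕ) : ℂ) ^ (k - 1) * ((d : ℕ) : ℂ) ^ (k - 1) := by
    push_cast
    rw [mul_zpow]
  rw [hcast]
  have hd2 : ((d : ℕ) : ℂ) ^ (k - 1) * (d : ℂ) ^ (-k) = (d : ℂ)⁻¹ := by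
    rw [← zpow_add₀ hdC, show k - 1 + -k = -1 by ring, zpow_neg_one]
  have hmulpow : (eTwoPiI σ ^ d * eTwoPiI τ ^ m * eTwoPiI (c γ)) ^ a
      = (eTwoPiI σ ^ d) ^ a * (eTwoPiI τ ^ m) ^ a * eTwoPiI (c γ) ^ a := by
    rw [mul_pow, mul_pow]
  rw [hmulpow]
  calc (eTwoPiI σ ^ d) ^ a * (((a : ℕ) : ℂ) ^ (k - 1) * ((d : ℕ) : ℂ) ^ (k - 1)) *
        (d : ℂ) ^ (-k) * D ((d : ℤ) * m, γ) * ((eTwoPiI τ ^ m) ^ a * eTwoPiI (c γ) ^ a)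
      = (((d : ℕ) : ℂ) ^ (k - 1) * (d : ℂ) ^ (-k)) *
        (D ((d : ℤ) * m, γ) * ((a : ℕ) : ℂ) ^ (k - 1) *
          ((eTwoPiI σ ^ d) ^ a * (eTwoPiI τ ^ m) ^ a * eTwoPiI (c γ) ^ a)) := by ring
    _ = _ := by rw [hd2]

/-- Collapsing the sum over `b` via character orthogonality and reindexing `n = d m`. -/
lemma bcollapse (k : ℤ) (D : ℤ × Γ → ℂ) (τ σ : ℂ) (c : Γ →+ ℂ) (a d : ℕ) (hd : d ≠ 0)
    (hs : ∀ b ∈ Finset.range d, Summable (GGt k D τ σ c a d b)) :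
    ∑ b ∈ Finset.range d, ∑' ng : ℤ × Γ, GGt k D τ σ c a d b ng
      = ∑' mγ : ℤ × Γ, Hfun k D τ σ c a d mγ := by
  classical
  have hdC : (d : ℂ) ≠ 0 := Nat.cast_ne_zero.mpr hd
  have hpt : ∀ ng : ℤ × Γ, ∑ b ∈ Finset.range d, GGt k D τ σ c a d b ng
      = if (d : ℤ) ∣ ng.1 then (d : ℂ) * GGt k D τ σ c a d 0 ng else 0 := by
    intro ng
    have hsplit : ∀ b : ℕ, GGt k D τ σ c a d b ng
        = GGt k D τ σ c a d 0 ng * eTwoPiI ((ng.1 : ℂ) * (b : ℂ) / (d : ℂ)) := by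
      intro b
      unfold GGt
      have harg : (ng.1 : ℂ) * ((a : ℂ) * τ + (b : ℂ)) / (d : ℂ) + (a : ℂ) * c ng.2
          = ((ng.1 : ℂ) * ((a : ℂ) * τ + ((0 : ℕ) : ℂ)) / (d : ℂ) + (a : ℂ) * c ng.2)
            + (ng.1 : ℂ) * (b : ℂ) / (d : ℂ) := by
        push_cast
        field_simp
        ring
      rw [harg, eTwoPiI_add]
      ring
    rw [Finset.sum_congr rfl (fun b _ => hsplit b), ← Finset.mul_sum, charSum d hd ng.1]
    split_ifs <;> ring
  rw [← Summable.tsum_finsetSum hs, tsum_congr hpt]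
  have hinj : Function.Injective (fun mγ : ℤ × Γ => (((d : ℤ) * mγ.1, mγ.2) : ℤ × Γ)) := by
    intro x y h
    simp only [Prod.mk.injEq] at h
    have hdZ : (d : ℤ) ≠ 0 := Int.natCast_ne_zero.mpr hd
    exact Prod.ext (mul_left_cancel₀ hdZ h.1) h.2
  have hsupp : Function.support
      (fun ng : ℤ × Γ => if (d : ℤ) ∣ ng.1 then (d : ℂ) * GGt k D τ σ c a d 0 ng else 0)
      ⊆ Set.range (fun mγ : ℤ × Γ => (((d : ℤ) * mγ.1, mγ.2) : ℤ × Γ)) := by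
    intro ng hng
    by_cases h : (d : ℤ) ∣ ng.1
    · obtain ⟨m, hm⟩ := h
      exact ⟨(m, ng.2), by simp [← hm]⟩
    · simp only [Function.mem_support, if_neg h] at hng
      exact absurd rfl hng
  rw [← hinj.tsum_eq hsupp]
  apply tsum_congr
  intro mγ
  have hdvd : (d : ℤ) ∣ (d : ℤ) * mγ.1 := ⟨mγ.1, rfl⟩
  simp only [if_pos hdvd]
  rw [show (((d : ℤ) * mγ.1, mγ.2) : ℤ × Γ) = ((d : ℤ) * mγ.1, mγ.2) from rfl,
    key_alg k D τ σ c a d 0 hd mγ.1 mγ.2, ← mul_assoc, mul_inv_cancel₀ hdC, one_mul]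

/-- The per-`ℓ` computation: `p^ℓ (Φ_k|V_ℓ) = Σ_{ad=ℓ} Σ_{m,γ} D(dm,γ) a^{k−1} (p^d q^m ζ^γ)^a`. -/
lemma perL (k : ℤ) (D : ℤ × Γ → ℂ) (τ σ : ℂ) (c : Γ →+ ℂ)
    (SG : Summable (heckeFamily k D τ σ c)) (L : ℕ) :
    eTwoPiI σ ^ (L + 1) * heckeTransform k D τ c (L + 1)
      = ∑ ad ∈ Nat.divisorsAntidiagonal (L + 1),
          ∑' mγ : ℤ × Γ, Hfun k D τ σ c ad.1 ad.2 mγ := by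
  have hsumGGt : ∀ a d b : ℕ, a * d = L + 1 → b < d → Summable (GGt k D τ σ c a d b) := by
    intro a d b had hb
    have hd : 0 < d := lt_of_le_of_lt (Nat.zero_le b) hb
    have ha : 0 < a := by
      rcases Nat.eq_zero_or_pos a with h | h
      · subst h; simp at had
      · exact h
    have hinj : Function.Injective (fun ng : ℤ × Γ =>
        (⟨a * d, a, d, b, ng.1, ng.2, by omega, ha, hd, rfl, hb⟩ : HeckeIndex Γ)) := by
      intro x y h
      have h1 := congrArg HeckeIndex.n h
      have h2 := congrArg HeckeIndex.γ h
      exact Prod.ext h1 h2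
    exact (SG.comp_injective hinj).congr (fun ng => rfl)
  unfold heckeTransform
  rw [← mul_assoc, Finset.mul_sum]
  apply Finset.sum_congr rfl
  intro ad had
  obtain ⟨had1, -⟩ := Nat.mem_divisorsAntidiagonal.mp had
  have hd : 0 < ad.2 := by
    rcases Nat.eq_zero_or_pos ad.2 with h | h
    · rw [h] at had1; simp at had1
    · exact h
  rw [Finset.mul_sum,
    ← bcollapse k D τ σ c ad.1 ad.2 hd.ne'
      (fun b hb => hsumGGt _ _ _ had1 (Finset.mem_range.mp hb))]
  apply Finset.sum_congr rfl
  intro b hb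
  have hterm : ∀ ng : ℤ × Γ, GGt k D τ σ c ad.1 ad.2 b ng
      = (eTwoPiI σ ^ (L + 1) * ((L + 1 : ℕ) : ℂ) ^ (k - 1) * (ad.2 : ℂ) ^ (-k))
        * (D ng * eTwoPiI ((ng.1 : ℂ) * ((ad.1 : ℂ) * τ + (b : ℂ)) / (ad.2 : ℂ)
            + (ad.1 : ℂ) * c ng.2)) := by
    intro ng
    simp only [GGt, had1]
    ring
  rw [tsum_congr hterm, tsum_mul_left]
  ring

/-- The polylog-side family over the index `ℕ × ℤ × Γ × ℕ`. -/
noncomputable def Ffun (k : ℤ) (D : ℤ × Γ → ℂ) (τ σ : ℂ) (c : Γ →+ ℂ)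
    (x : ℕ × ℤ × Γ × ℕ) : ℂ :=
  Hfun k D τ σ c (x.2.2.2 + 1) (x.1 + 1) (x.2.1, x.2.2.1)

/-- Regrouping equivalence `ℕ × ℕ ≃ Σ L, divisorsAntidiagonal (L+1)`. -/
def E3 : (ℕ × ℕ) ≃ Σ L : ℕ, {x : ℕ × ℕ // x ∈ Nat.divisorsAntidiagonal (L + 1)} where
  toFun uv := ⟨(uv.1 + 1) * (uv.2 + 1) - 1, ⟨(uv.1 + 1, uv.2 + 1), by
    rw [Nat.mem_divisorsAntidiagonal]
    have h1 : 1 ≤ (uv.1 + 1) * (uv.2 + 1) := Nat.one_le_iff_ne_zero.mpr (by positivity)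
    constructor
    · show (uv.1 + 1) * (uv.2 + 1) = (uv.1 + 1) * (uv.2 + 1) - 1 + 1
      omega
    · omega⟩⟩
  invFun z := (z.2.1.1 - 1, z.2.1.2 - 1)
  left_inv uv := rfl
  right_inv z := by
    rcases z with ⟨L, ⟨⟨a, d⟩, hm⟩⟩
    rw [Nat.mem_divisorsAntidiagonal] at hm
    obtain ⟨h1, h2⟩ := hm
    rcases a with _ | u
    · simp at h1
    rcases d with _ | v
    · simp at h1
    have h1' : (u + 1) * (v + 1) = L + 1 := h1
    have hL : (u + 1) * (v + 1) - 1 = L := by omega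
    subst hL
    rfl

/-- Reordering equivalence `(L,n,γ,h) ↦ ((h,L),(n,γ))`. -/
def E4 : (ℕ × ℤ × Γ × ℕ) ≃ ((ℕ × ℕ) × (ℤ × Γ)) where
  toFun x := ((x.2.2.2, x.1), (x.2.1, x.2.2.1))
  invFun y := (y.1.2, y.2.1, y.2.2, y.1.1)
  left_inv _ := rfl
  right_inv _ := rfl

/-- Associativity equivalence. -/
def E5 {Γ : Type*} : ((ℕ × ℤ × Γ) × ℕ) ≃ (ℕ × ℤ × Γ × ℕ) where
  toFun w := (w.1.1, w.1.2.1, w.1.2.2, w.2)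
  invFun x := ((x.1, x.2.1, x.2.2.1), x.2.2.2)
  left_inv _ := rfl
  right_inv _ := rfl

/-- Embedding of `(x, b)` with `b < d` into the Hecke index set. -/
def emb (y : Σ x : ℕ × ℤ × Γ × ℕ, Fin (x.1 + 1)) : HeckeIndex Γ :=
  ⟨(y.1.2.2.2 + 1) * (y.1.1 + 1), y.1.2.2.2 + 1, y.1.1 + 1, y.2.1,
    ((y.1.1 + 1 : ℕ) : ℤ) * y.1.2.1, y.1.2.2.1,
    Nat.one_le_iff_ne_zero.mpr (by positivity), Nat.succ_le_succ (Nat.zero_le _),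
    Nat.succ_le_succ (Nat.zero_le _), rfl, y.2.2⟩

omit [AddCommGroup Γ] in
lemma emb_inj : Function.Injective (emb (Γ := Γ)) := by
  rintro ⟨⟨L, n, γ, h⟩, b⟩ ⟨⟨L', n', γ', h'⟩, b'⟩ he
  have h1 := congrArg HeckeIndex.a he
  have h2 := congrArg HeckeIndex.d he
  have h3 := congrArg HeckeIndex.b he
  have h4 := congrArg HeckeIndex.n he
  have h5 := congrArg HeckeIndex.γ he
  simp only [emb] at h1 h2 h3 h4 h5
  obtain rfl : L = L' := by omega
  obtain rfl : h = h' := by omega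
  obtain rfl : γ = γ' := h5
  obtain rfl : n = n' := by
    have hz : ((L + 1 : ℕ) : ℤ) ≠ 0 := by exact_mod_cast Nat.succ_ne_zero L
    exact mul_left_cancel₀ hz h4
  obtain rfl : b = b' := Fin.ext h3
  rfl

lemma hGemb (k : ℤ) (D : ℤ × Γ → ℂ) (τ σ : ℂ) (c : Γ →+ ℂ)
    (x : ℕ × ℤ × Γ × ℕ) (b : Fin (x.1 + 1)) :
    heckeFamily k D τ σ c (emb ⟨x, b⟩)
      = ((x.1 + 1 : ℕ) : ℂ)⁻¹ * Ffun k D τ σ c x := by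
  have h0 : heckeFamily k D τ σ c (emb ⟨x, b⟩)
      = GGt k D τ σ c (x.2.2.2 + 1) (x.1 + 1) b.1 (((x.1 + 1 : ℕ) : ℤ) * x.2.1, x.2.2.1) := rfl
  rw [h0, key_alg k D τ σ c _ _ _ (Nat.succ_ne_zero x.1) x.2.1 x.2.2.1]
  rfl

/-- The summability of the polylog-side family. -/
lemma claim2 (k : ℤ) (D : ℤ × Γ → ℂ) (τ σ : ℂ) (c : Γ →+ ℂ)
    (habs : Summable (fun i : HeckeIndex Γ => ‖heckeFamily k D τ σ c i‖)) :
    Summable (fun x : ℕ × ℤ × Γ × ℕ => ‖Ffun k D τ σ c x‖) := by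
  have SGemb : Summable (fun y : Σ x : ℕ × ℤ × Γ × ℕ, Fin (x.1 + 1) =>
      ‖heckeFamily k D τ σ c (emb y)‖) := habs.comp_injective emb_inj
  have hnorm : ∀ x : ℕ × ℤ × Γ × ℕ,
      ∑' b : Fin (x.1 + 1), ‖heckeFamily k D τ σ c (emb ⟨x, b⟩)‖
        = ‖Ffun k D τ σ c x‖ := by
    intro x
    have hR : ((x.1 + 1 : ℕ) : ℝ) ≠ 0 := by exact_mod_cast Nat.succ_ne_zero x.1
    simp only [hGemb, norm_mul, norm_inv, Complex.norm_natCast]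
    rw [tsum_fintype]
    rw [Finset.sum_const, Finset.card_univ, Fintype.card_fin, nsmul_eq_mul]
    field_simp
  exact (summable_congr hnorm).mp SGemb.sigma

/-- The main rearrangement: `Σ_ℓ p^ℓ (Φ_k|V_ℓ)` as a sum over `ℕ × ℤ × Γ × ℕ`. -/
lemma main_eq (k : ℤ) (D : ℤ × Γ → ℂ) (τ σ : ℂ) (c : Γ →+ ℂ)
    (SG : Summable (heckeFamily k D τ σ c)) (SF : Summable (Ffun k D τ σ c)) :
    ∑' L : ℕ, eTwoPiI σ ^ (L + 1) * heckeTransform k D τ c (L + 1)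
      = ∑' x : ℕ × ℤ × Γ × ℕ, Ffun k D τ σ c x := by
  have SHc : Summable (fun y : (ℕ × ℕ) × (ℤ × Γ) =>
      Hfun k D τ σ c (y.1.1 + 1) (y.1.2 + 1) y.2) := by
    rw [← Equiv.summable_iff (E4 (Γ := Γ))]
    exact SF
  have SWsig : Summable (fun z : Σ L : ℕ, {x : ℕ × ℕ // x ∈ Nat.divisorsAntidiagonal (L + 1)} =>
      ∑' mγ : ℤ × Γ, Hfun k D τ σ c z.2.1.1 z.2.1.2 mγ) := by
    rw [← Equiv.summable_iff E3]
    exact SHc.prod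
  calc ∑' L : ℕ, eTwoPiI σ ^ (L + 1) * heckeTransform k D τ c (L + 1)
      = ∑' L : ℕ, ∑ ad ∈ Nat.divisorsAntidiagonal (L + 1),
          ∑' mγ : ℤ × Γ, Hfun k D τ σ c ad.1 ad.2 mγ :=
        tsum_congr (fun L => perL k D τ σ c SG L)
    _ = ∑' (L : ℕ) (ad : {x : ℕ × ℕ // x ∈ Nat.divisorsAntidiagonal (L + 1)}),
          ∑' mγ : ℤ × Γ, Hfun k D τ σ c (ad : ℕ × ℕ).1 (ad : ℕ × ℕ).2 mγ :=
        tsum_congr (fun L => (Finset.tsum_subtype (Nat.divisorsAntidiagonal (L + 1))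
          (fun ad => ∑' mγ : ℤ × Γ, Hfun k D τ σ c ad.1 ad.2 mγ)).symm)
    _ = ∑' z : Σ L : ℕ, {x : ℕ × ℕ // x ∈ Nat.divisorsAntidiagonal (L + 1)},
          ∑' mγ : ℤ × Γ, Hfun k D τ σ c z.2.1.1 z.2.1.2 mγ := (Summable.tsum_sigma SWsig).symm
    _ = ∑' uv : ℕ × ℕ, ∑' mγ : ℤ × Γ, Hfun k D τ σ c (uv.1 + 1) (uv.2 + 1) mγ :=
        (Equiv.tsum_eq E3 _).symm
    _ = ∑' y : (ℕ × ℕ) × (ℤ × Γ), Hfun k D τ σ c (y.1.1 + 1) (y.1.2 + 1) y.2 :=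
        (Summable.tsum_prod SHc).symm
    _ = ∑' x : ℕ × ℤ × Γ × ℕ, Ffun k D τ σ c x :=
        (Equiv.tsum_eq (E4 (Γ := Γ))
          (fun y => Hfun k D τ σ c (y.1.1 + 1) (y.1.2 + 1) y.2)).symm

/-- The claim-1 summability. -/
lemma claim1 (k : ℤ) (D : ℤ × Γ → ℂ) (τ σ : ℂ) (c : Γ →+ ℂ)
    (habs : Summable (fun i : HeckeIndex Γ => ‖heckeFamily k D τ σ c i‖)) :
    Summable (fun L : ℕ => ‖eTwoPiI σ ^ (L + 1) * heckeTransform k D τ c (L + 1)‖) := by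
  have SG : Summable (heckeFamily k D τ σ c) := habs.of_norm
  have c2 := claim2 k D τ σ c habs
  have SHn : Summable (fun y : (ℕ × ℕ) × (ℤ × Γ) =>
      ‖Hfun k D τ σ c (y.1.1 + 1) (y.1.2 + 1) y.2‖) := by
    rw [← Equiv.summable_iff (E4 (Γ := Γ))]
    exact c2
  have SH6 : Summable (fun z : Σ L : ℕ,
      ({x : ℕ × ℕ // x ∈ Nat.divisorsAntidiagonal (L + 1)} × (ℤ × Γ)) =>
      ‖Hfun k D τ σ c z.2.1.1.1 z.2.1.1.2 z.2.2‖) := by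
    rw [← Equiv.summable_iff ((E3.prodCongr (Equiv.refl (ℤ × Γ))).trans
      (Equiv.sigmaProdDistrib _ _))]
    exact SHn
  apply Summable.of_nonneg_of_le (fun L => norm_nonneg _) _ SH6.sigma
  intro L
  rw [perL k D τ σ c SG L]
  have fibsum : ∀ ad : {x : ℕ × ℕ // x ∈ Nat.divisorsAntidiagonal (L + 1)},
      Summable (fun mγ : ℤ × Γ => ‖Hfun k D τ σ c ad.1.1 ad.1.2 mγ‖) :=
    fun ad => (SH6.sigma_factor L).prod_factor ad
  calc ‖∑ ad ∈ Nat.divisorsAntidiagonal (L + 1), ∑' mγ : ℤ × Γ, Hfun k D τ σ c ad.1 ad.2 mγ‖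
      ≤ ∑ ad ∈ Nat.divisorsAntidiagonal (L + 1),
          ‖∑' mγ : ℤ × Γ, Hfun k D τ σ c ad.1 ad.2 mγ‖ := norm_sum_le _ _
    _ ≤ ∑ ad ∈ Nat.divisorsAntidiagonal (L + 1),
          ∑' mγ : ℤ × Γ, ‖Hfun k D τ σ c ad.1 ad.2 mγ‖ :=
        Finset.sum_le_sum (fun ad had => norm_tsum_le_tsum_norm (fibsum ⟨ad, had⟩))
    _ = ∑' ad : {x : ℕ × ℕ // x ∈ Nat.divisorsAntidiagonal (L + 1)},
          ∑' mγ : ℤ × Γ, ‖Hfun k D τ σ c (ad : ℕ × ℕ).1 (ad : ℕ × ℕ).2 mγ‖ :=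
        (Finset.tsum_subtype (Nat.divisorsAntidiagonal (L + 1))
          (fun ad => ∑' mγ : ℤ × Γ, ‖Hfun k D τ σ c ad.1 ad.2 mγ‖)).symm
    _ = ∑' yc : {x : ℕ × ℕ // x ∈ Nat.divisorsAntidiagonal (L + 1)} × (ℤ × Γ),
          ‖Hfun k D τ σ c yc.1.1.1 yc.1.1.2 yc.2‖ :=
        (Summable.tsum_prod' (SH6.sigma_factor L) fibsum).symm

end HeckeLift

set_option maxHeartbeats 1600000 in
/-- under the absolute-summability hypothesis,
`Σ_{ℓ≥1} p^ℓ (Φ_k|V_ℓ) = Σ_{ℓ≥1,(n,γ)} D(ℓn,γ) · Li_{1−k}(p^ℓ qⁿ ζ^γ)`,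
with `p = e[σ]`, `q = e[τ]`, `ζ^γ = e[c(γ)]`, and all sums on both sides
converging absolutely. -/
theorem hecke_lift_eq_polylog_sum {Γ : Type*} [AddCommGroup Γ]
    (k : ℤ) (n₀ : ℕ) (D : ℤ × Γ → ℂ)
    (hD : ∀ (n : ℤ) (γ : Γ), n < -(n₀ : ℤ) → D (n, γ) = 0)
    (τ σ : ℂ) (c : Γ →+ ℂ)
    (habs : Summable (fun i : HeckeIndex Γ => ‖heckeFamily k D τ σ c i‖)) :
    Summable (fun ℓ : ℕ => ‖eTwoPiI σ ^ (ℓ + 1) * heckeTransform k D τ c (ℓ + 1)‖) ∧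
    Summable (fun x : ℕ × ℤ × Γ × ℕ =>
      ‖D (((x.1 + 1 : ℕ) : ℤ) * x.2.1, x.2.2.1) * ((x.2.2.2 + 1 : ℕ) : ℂ) ^ (k - 1) *
        (eTwoPiI σ ^ (x.1 + 1) * eTwoPiI τ ^ x.2.1 * eTwoPiI (c x.2.2.1)) ^ (x.2.2.2 + 1)‖) ∧
    ∑' ℓ : ℕ, eTwoPiI σ ^ (ℓ + 1) * heckeTransform k D τ c (ℓ + 1)
      = ∑' x : ℕ × ℤ × Γ,
          D (((x.1 + 1 : ℕ) : ℤ) * x.2.1, x.2.2) *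
            LiOneSubK k (eTwoPiI σ ^ (x.1 + 1) * eTwoPiI τ ^ x.2.1 * eTwoPiI (c x.2.2)) := by
  have SG : Summable (heckeFamily k D τ σ c) := habs.of_norm
  have c2 := HeckeLift.claim2 k D τ σ c habs
  have SF : Summable (HeckeLift.Ffun k D τ σ c) := c2.of_norm
  have c2' : Summable (fun x : ℕ × ℤ × Γ × ℕ =>
      ‖D (((x.1 + 1 : ℕ) : ℤ) * x.2.1, x.2.2.1) * ((x.2.2.2 + 1 : ℕ) : ℂ) ^ (k - 1) *
        (eTwoPiI σ ^ (x.1 + 1) * eTwoPiI τ ^ x.2.1 * eTwoPiI (c x.2.2.1)) ^ (x.2.2.2 + 1)‖) := by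
    have hpteq : ∀ x : ℕ × ℤ × Γ × ℕ, ‖HeckeLift.Ffun k D τ σ c x‖
        = ‖D (((x.1 + 1 : ℕ) : ℤ) * x.2.1, x.2.2.1) * ((x.2.2.2 + 1 : ℕ) : ℂ) ^ (k - 1) *
          (eTwoPiI σ ^ (x.1 + 1) * eTwoPiI τ ^ x.2.1 * eTwoPiI (c x.2.2.1)) ^ (x.2.2.2 + 1)‖ :=
      fun x => rfl
    exact (summable_congr hpteq).mp c2
  refine ⟨HeckeLift.claim1 k D τ σ c habs, c2', ?_⟩
  rw [HeckeLift.main_eq k D τ σ c SG SF]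
  have SFE5 : Summable (fun w : (ℕ × ℤ × Γ) × ℕ => HeckeLift.Ffun k D τ σ c (HeckeLift.E5 w)) :=
    (Equiv.summable_iff HeckeLift.E5).mpr SF
  calc ∑' x : ℕ × ℤ × Γ × ℕ, HeckeLift.Ffun k D τ σ c x
      = ∑' w : (ℕ × ℤ × Γ) × ℕ, HeckeLift.Ffun k D τ σ c (HeckeLift.E5 w) :=
        (Equiv.tsum_eq HeckeLift.E5 _).symm
    _ = ∑' (v : ℕ × ℤ × Γ) (h : ℕ), HeckeLift.Ffun k D τ σ c (HeckeLift.E5 (v, h)) :=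
        Summable.tsum_prod SFE5
    _ = ∑' x : ℕ × ℤ × Γ,
          D (((x.1 + 1 : ℕ) : ℤ) * x.2.1, x.2.2) *
            LiOneSubK k (eTwoPiI σ ^ (x.1 + 1) * eTwoPiI τ ^ x.2.1 * eTwoPiI (c x.2.2)) := by
        apply tsum_congr
        intro v
        have hpt : ∀ h : ℕ, HeckeLift.Ffun k D τ σ c (HeckeLift.E5 (v, h))
            = D (((v.1 + 1 : ℕ) : ℤ) * v.2.1, v.2.2) *
              (((h + 1 : ℕ) : ℂ) ^ (k - 1) *
                (eTwoPiI σ ^ (v.1 + 1) * eTwoPiI τ ^ v.2.1 * eTwoPiI (c v.2.2)) ^ (h + 1)) := by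
          intro h
          simp only [HeckeLift.E5, Equiv.coe_fn_mk, HeckeLift.Ffun, HeckeLift.Hfun]
          ring
        rw [tsum_congr hpt, tsum_mul_left]
        simp only [LiOneSubK]
end

section
/- For all positive integers N and k, setting M := N + k, one has M^{(k−1)/2} · ∏_{j=1}^{N−1} (2 sin(π j/M))^{N−j} = M^{(N−1)/2} · ∏_{j=1}^{k−1} (2 sin(π j/M))^{k−j} (an identity of positive real numbers, where M^{(k−1)/2} denotes the real power). Equivalently, √N · Z_W(S³;N,k) = √k · Z_W(S³;k,N), where Z_W(S³;N,k) := (N · M^{N−1})^{−1/2} ∏_{j=1}^{N−1} (2 sin(π j/M))^{N−j} is the partition function of SU(N) Chern–Simons theory on S³ at level k. -/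
open Real Finset

lemma abs_one_sub_exp (θ : ℝ) :
    ‖1 - Complex.exp (θ * Complex.I)‖ = 2 * |Real.sin (θ / 2)| := by
  have h2 : (‖1 - Complex.exp (θ * Complex.I)‖) ^ 2 = (2 * |Real.sin (θ / 2)|) ^ 2 := by
    rw [Complex.sq_norm, Complex.normSq_apply]
    simp only [Complex.sub_re, Complex.sub_im, Complex.one_re, Complex.one_im,
      Complex.exp_ofReal_mul_I_re, Complex.exp_ofReal_mul_I_im]
    have hc : Real.cos (θ/2) ^ 2 = 1/2 + Real.cos θ / 2 := by
      have := Real.cos_sq (θ/2); rw [mul_div_cancel₀ θ (two_ne_zero)] at this; exact this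
    have hs : Real.sin (θ/2) ^ 2 + Real.cos (θ/2) ^ 2 = 1 := Real.sin_sq_add_cos_sq _
    rw [mul_pow, _root_.sq_abs]
    nlinarith [Real.sin_sq_add_cos_sq θ]
  have h0 : (0:ℝ) ≤ 2 * |Real.sin (θ / 2)| := by positivity
  nlinarith [norm_nonneg (1 - Complex.exp (θ * Complex.I))]

set_option maxHeartbeats 1000000 in
lemma key_prod (M : ℕ) (hM : 0 < M) :
    ∏ j ∈ Finset.Icc 1 (M - 1), (2 * Real.sin (Real.pi * j / M)) = M := by
  obtain ⟨n, rfl⟩ : ∃ n, M = n + 1 := ⟨M - 1, by omega⟩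
  have hμ := Complex.isPrimitiveRoot_exp (n + 1) (Nat.succ_ne_zero n)
  have h := hμ.prod_one_sub_pow_eq_order
  have habs := congrArg (‖·‖) h
  rw [Complex.norm_prod] at habs
  have hterm : ∀ j ∈ Finset.range n,
      ‖1 - Complex.exp (2 * Real.pi * Complex.I / ((n+1 : ℕ) : ℂ)) ^ (j + 1)‖
        = 2 * Real.sin (Real.pi * (j + 1) / (n + 1)) := by
    intro j hj
    rw [← Complex.exp_nat_mul]
    have harg : ((j : ℂ) + 1) * (2 * Real.pi * Complex.I / ((n : ℂ) + 1))
        = ((2 * Real.pi * (j + 1) / (n + 1) : ℝ) : ℂ) * Complex.I := by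
      push_cast
      field_simp
    push_cast
    rw [harg, abs_one_sub_exp]
    have hθ : 2 * Real.pi * (j + 1) / (n + 1) / 2 = Real.pi * (j + 1) / (n + 1) := by ring
    rw [hθ, abs_of_nonneg]
    apply Real.sin_nonneg_of_nonneg_of_le_pi
    · positivity
    · rw [div_le_iff₀ (by positivity)]
      have hj' : (j : ℝ) ≤ n := by exact_mod_cast (Finset.mem_range.mp hj).le
      nlinarith [Real.pi_pos]
  rw [Finset.prod_congr rfl hterm] at habs
  have hrhs : ‖(n : ℂ) + 1‖ = (n + 1 : ℝ) := by
    rw [show ((n : ℂ) + 1) = ((n + 1 : ℝ) : ℂ) by push_cast; ring, Complex.norm_real,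
      Real.norm_of_nonneg (by positivity)]
  rw [hrhs] at habs
  rw [show (n + 1) - 1 = n from rfl, ← Finset.Ico_add_one_right_eq_Icc, Finset.prod_Ico_eq_prod_range,
    show n + 1 - 1 = n from rfl]
  push_cast
  refine Eq.trans (Finset.prod_congr rfl fun j hj => ?_) habs
  ring_nf

/-- level-rank duality of the SU(N) level k Chern–Simons partition
function on S³: for positive integers `N`, `k`, with `M := N + k`,
`M^{(k−1)/2} ∏_{j=1}^{N−1} (2 sin(πj/M))^{N−j}
  = M^{(N−1)/2} ∏_{j=1}^{k−1} (2 sin(πj/M))^{k−j}`,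
equivalently `√N · Z_W(S³;N,k) = √k · Z_W(S³;k,N)`. -/
theorem level_rank_duality (N k : ℕ) (hN : 0 < N) (hk : 0 < k) :
    ((N + k : ℕ) : ℝ) ^ (((k : ℝ) - 1) / 2) *
        ∏ j ∈ Finset.Icc 1 (N - 1), (2 * Real.sin (Real.pi * j / (N + k))) ^ (N - j)
      = ((N + k : ℕ) : ℝ) ^ (((N : ℝ) - 1) / 2) *
        ∏ j ∈ Finset.Icc 1 (k - 1), (2 * Real.sin (Real.pi * j / (N + k))) ^ (k - j) := by
  set M := N + k with hMdef
  have hM : 0 < M := by omega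
  have hMR : ((N : ℝ) + k) = (M : ℝ) := by push_cast [hMdef]; ring
  clear_value M
  set s : ℕ → ℝ := fun j => 2 * Real.sin (Real.pi * j / M) with hs
  have hspos : ∀ j ∈ Finset.Icc 1 (M - 1), 0 < s j := by
    intro j hj
    obtain ⟨h1, h2⟩ := Finset.mem_Icc.mp hj
    have hjM : (j : ℝ) < M := by exact_mod_cast (by omega : j < M)
    have hj0 : (0 : ℝ) < j := by exact_mod_cast h1
    have hpi := Real.pi_pos
    have hsin : 0 < Real.sin (Real.pi * j / M) := by
      apply Real.sin_pos_of_pos_of_lt_pi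
      · positivity
      · rw [div_lt_iff₀ (by positivity)]
        nlinarith
    simp only [hs]; linarith
  have hrefl : ∀ j, 1 ≤ j → j ≤ M - 1 → s (M - j) = s j := by
    intro j h1 h2
    have hcast : ((M - j : ℕ) : ℝ) = (M : ℝ) - j := by
      rw [Nat.cast_sub (by omega)]
    simp only [hs, hcast]
    have hM0 : (M : ℝ) ≠ 0 := by positivity
    rw [show Real.pi * ((M : ℝ) - j) / M = Real.pi - Real.pi * j / M by field_simp,
      Real.sin_pi_sub]
  have hA : ∏ j ∈ Finset.Icc 1 (N - 1), s j ^ (N - j)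
      = ∏ j ∈ Finset.Icc (k + 1) (M - 1), s j ^ (j - k) := by
    refine Finset.prod_bij' (fun j _ => M - j) (fun j _ => M - j) ?_ ?_ ?_ ?_ ?_
    · intro a ha; obtain ⟨h1, h2⟩ := Finset.mem_Icc.mp ha
      rw [Finset.mem_Icc]; omega
    · intro a ha; obtain ⟨h1, h2⟩ := Finset.mem_Icc.mp ha
      rw [Finset.mem_Icc]; omega
    · intro a ha; obtain ⟨h1, h2⟩ := Finset.mem_Icc.mp ha; omega
    · intro a ha; obtain ⟨h1, h2⟩ := Finset.mem_Icc.mp ha; omega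
    · intro a ha; obtain ⟨h1, h2⟩ := Finset.mem_Icc.mp ha
      rw [hrefl a (by omega) (by omega)]
      congr 1; omega
  have hB : ∏ j ∈ Finset.Icc 1 (k - 1), s j ^ (k - j)
      = ∏ j ∈ Finset.Icc (N + 1) (M - 1), s j ^ (j - N) := by
    refine Finset.prod_bij' (fun j _ => M - j) (fun j _ => M - j) ?_ ?_ ?_ ?_ ?_
    · intro a ha; obtain ⟨h1, h2⟩ := Finset.mem_Icc.mp ha
      rw [Finset.mem_Icc]; omega
    · intro a ha; obtain ⟨h1, h2⟩ := Finset.mem_Icc.mp ha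
      rw [Finset.mem_Icc]; omega
    · intro a ha; obtain ⟨h1, h2⟩ := Finset.mem_Icc.mp ha; omega
    · intro a ha; obtain ⟨h1, h2⟩ := Finset.mem_Icc.mp ha; omega
    · intro a ha; obtain ⟨h1, h2⟩ := Finset.mem_Icc.mp ha
      rw [hrefl a (by omega) (by omega)]
      congr 1; omega
  have hsub1 : Finset.Icc 1 (N - 1) ⊆ Finset.Icc 1 (M - 1) :=
    Finset.Icc_subset_Icc (le_refl 1) (by omega)
  have hsub2 : Finset.Icc (k + 1) (M - 1) ⊆ Finset.Icc 1 (M - 1) :=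
    Finset.Icc_subset_Icc (by omega) (le_refl _)
  have hsub3 : Finset.Icc 1 (k - 1) ⊆ Finset.Icc 1 (M - 1) :=
    Finset.Icc_subset_Icc (le_refl 1) (by omega)
  have hsub4 : Finset.Icc (N + 1) (M - 1) ⊆ Finset.Icc 1 (M - 1) :=
    Finset.Icc_subset_Icc (by omega) (le_refl _)
  have hext1 : ∏ j ∈ Finset.Icc 1 (N - 1), s j ^ (N - j)
      = ∏ j ∈ Finset.Icc 1 (M - 1), s j ^ (N - j) := by
    refine Finset.prod_subset hsub1 ?_
    intro x hx hx'
    simp only [Finset.mem_Icc] at hx hx'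
    rw [show N - x = 0 by omega, pow_zero]
  have hext2 : ∏ j ∈ Finset.Icc (k + 1) (M - 1), s j ^ (j - k)
      = ∏ j ∈ Finset.Icc 1 (M - 1), s j ^ (j - k) := by
    refine Finset.prod_subset hsub2 ?_
    intro x hx hx'
    simp only [Finset.mem_Icc] at hx hx'
    rw [show x - k = 0 by omega, pow_zero]
  have hext3 : ∏ j ∈ Finset.Icc 1 (k - 1), s j ^ (k - j)
      = ∏ j ∈ Finset.Icc 1 (M - 1), s j ^ (k - j) := by
    refine Finset.prod_subset hsub3 ?_
    intro x hx hx'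
    simp only [Finset.mem_Icc] at hx hx'
    rw [show k - x = 0 by omega, pow_zero]
  have hext4 : ∏ j ∈ Finset.Icc (N + 1) (M - 1), s j ^ (j - N)
      = ∏ j ∈ Finset.Icc 1 (M - 1), s j ^ (j - N) := by
    refine Finset.prod_subset hsub4 ?_
    intro x hx hx'
    simp only [Finset.mem_Icc] at hx hx'
    rw [show x - N = 0 by omega, pow_zero]
  have hkey : ∏ j ∈ Finset.Icc 1 (M - 1), s j = (M : ℝ) := key_prod M hM
  have hAA : (∏ j ∈ Finset.Icc 1 (N - 1), s j ^ (N - j)) ^ 2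
      = ∏ j ∈ Finset.Icc 1 (M - 1), s j ^ ((N - j) + (j - k)) := by
    rw [sq]
    nth_rewrite 2 [hA]
    rw [hext1, hext2, ← Finset.prod_mul_distrib]
    exact Finset.prod_congr rfl fun j _ => (pow_add _ _ _).symm
  have hBB : (∏ j ∈ Finset.Icc 1 (k - 1), s j ^ (k - j)) ^ 2
      = ∏ j ∈ Finset.Icc 1 (M - 1), s j ^ ((k - j) + (j - N)) := by
    rw [sq]
    nth_rewrite 2 [hB]
    rw [hext3, hext4, ← Finset.prod_mul_distrib]
    exact Finset.prod_congr rfl fun j _ => (pow_add _ _ _).symm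
  have hsq : (M : ℝ) ^ (k - 1) * (∏ j ∈ Finset.Icc 1 (N - 1), s j ^ (N - j)) ^ 2
      = (M : ℝ) ^ (N - 1) * (∏ j ∈ Finset.Icc 1 (k - 1), s j ^ (k - j)) ^ 2 := by
    rw [hAA, hBB, ← hkey, ← Finset.prod_pow, ← Finset.prod_pow,
      ← Finset.prod_mul_distrib, ← Finset.prod_mul_distrib]
    refine Finset.prod_congr rfl fun j hj => ?_
    obtain ⟨h1, h2⟩ := Finset.mem_Icc.mp hj
    rw [← pow_add, ← pow_add]
    congr 1
    omega
  -- positivity of the two sides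
  have hApos : 0 < ∏ j ∈ Finset.Icc 1 (N - 1), s j ^ (N - j) :=
    Finset.prod_pos fun j hj => pow_pos (hspos j (hsub1 hj)) _
  have hBpos : 0 < ∏ j ∈ Finset.Icc 1 (k - 1), s j ^ (k - j) :=
    Finset.prod_pos fun j hj => pow_pos (hspos j (hsub3 hj)) _
  have hM0 : (0 : ℝ) < (M : ℝ) := by exact_mod_cast hM
  have hr1 : ((M : ℝ) ^ (((k : ℝ) - 1) / 2)) ^ 2 = (M : ℝ) ^ (k - 1) := by
    rw [← Real.rpow_natCast ((M : ℝ) ^ (((k : ℝ) - 1) / 2)) 2, ← Real.rpow_mul hM0.le,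
      show ((k : ℝ) - 1) / 2 * ((2 : ℕ) : ℝ) = ((k - 1 : ℕ) : ℝ) by
        rw [Nat.cast_sub hk]; push_cast; ring,
      Real.rpow_natCast]
  have hr2 : ((M : ℝ) ^ (((N : ℝ) - 1) / 2)) ^ 2 = (M : ℝ) ^ (N - 1) := by
    rw [← Real.rpow_natCast ((M : ℝ) ^ (((N : ℝ) - 1) / 2)) 2, ← Real.rpow_mul hM0.le,
      show ((N : ℝ) - 1) / 2 * ((2 : ℕ) : ℝ) = ((N - 1 : ℕ) : ℝ) by
        rw [Nat.cast_sub hN]; push_cast; ring,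
      Real.rpow_natCast]
  have hLpos : 0 < (M : ℝ) ^ (((k : ℝ) - 1) / 2) *
      ∏ j ∈ Finset.Icc 1 (N - 1), s j ^ (N - j) :=
    mul_pos (Real.rpow_pos_of_pos hM0 _) hApos
  have hRpos : 0 < (M : ℝ) ^ (((N : ℝ) - 1) / 2) *
      ∏ j ∈ Finset.Icc 1 (k - 1), s j ^ (k - j) :=
    mul_pos (Real.rpow_pos_of_pos hM0 _) hBpos
  have hsq2 : ((M : ℝ) ^ (((k : ℝ) - 1) / 2) *
      ∏ j ∈ Finset.Icc 1 (N - 1), s j ^ (N - j)) ^ 2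
      = ((M : ℝ) ^ (((N : ℝ) - 1) / 2) *
      ∏ j ∈ Finset.Icc 1 (k - 1), s j ^ (k - j)) ^ 2 := by
    rw [mul_pow, mul_pow, hr1, hr2, hsq]
  have hfinal : (M : ℝ) ^ (((k : ℝ) - 1) / 2) *
      (∏ j ∈ Finset.Icc 1 (N - 1), s j ^ (N - j))
      = (M : ℝ) ^ (((N : ℝ) - 1) / 2) *
      (∏ j ∈ Finset.Icc 1 (k - 1), s j ^ (k - j)) := by
    calc _ = Real.sqrt (((M : ℝ) ^ (((k : ℝ) - 1) / 2) *
          ∏ j ∈ Finset.Icc 1 (N - 1), s j ^ (N - j)) ^ 2) := (Real.sqrt_sq hLpos.le).symm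
      _ = Real.sqrt (((M : ℝ) ^ (((N : ℝ) - 1) / 2) *
          ∏ j ∈ Finset.Icc 1 (k - 1), s j ^ (k - j)) ^ 2) := by rw [hsq2]
      _ = _ := Real.sqrt_sq hRpos.le
  rw [hMR]
  exact hfinal
end
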